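/- arXiv:2202.03060 — 4 statements merged into one kernel-verified Lean document; each statement's English description precedes it below -/
import Mathlib

section
/- For every controlled Markov process and every (possibly non-Markovian, possibly randomized) policy π, there exists a Markovian policy π' = (π'_t)_{t≥0} such that the t-step state distributions coincide: d_t^{π'}(s) = d_t^π(s) for every t ≥ 0 and every state s. (The policy π' can be taken to be π'_t(a|s) = d_t^π(s,a)/d_t^π(s), where d_t^π(s,a) is the t-step state-action distribution of π.) -/
open scoped BigOperators

/-- A controlled Markov process over finite state space `S` and action space `A`:
a transition kernel `P` and an initial distribution `μ`. -/
structure CMP (S A : Type) [Fintype S] [Fintype A] where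
  P : S → A → S → ℝ
  P_nonneg : ∀ s a s', 0 ≤ P s a s'
  P_sum_one : ∀ s a, ∑ s', P s a s' = 1
  μ : S → ℝ
  μ_nonneg : ∀ s, 0 ≤ μ s
  μ_sum_one : ∑ s, μ s = 1

/-- A history of `t` steps: states `s_0, …, s_t` and actions `a_0, …, a_{t-1}`. -/
abbrev Hist (S A : Type) (t : ℕ) : Type := (Fin (t + 1) → S) × (Fin t → A)

/-- A continuation of `k` further steps: actions `a_0, …, a_{k-1}` together with the
states those actions lead to. -/
abbrev Contin (S A : Type) (k : ℕ) : Type := (Fin k → A) × (Fin k → S)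

/-- A general (possibly non-Markovian, possibly randomized) policy: for every time `t`
and history of length `t`, a probability distribution over actions. -/
structure Policy (S A : Type) [Fintype A] where
  p : ∀ t : ℕ, Hist S A t → A → ℝ
  nonneg : ∀ t h a, 0 ≤ p t h a
  sum_one : ∀ t h, ∑ a, p t h a = 1

/-- A Markovian (randomized, time-dependent) policy: for every time `t` and current
state `s`, a probability distribution over actions. -/
structure MPolicy (S A : Type) [Fintype A] where
  p : ℕ → S → A → ℝ
  nonneg : ∀ t s a, 0 ≤ p t s a
  sum_one : ∀ t s, ∑ a, p t s a = 1

/-- The last (current) state of a history. -/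
def lastState {S A : Type} {t : ℕ} (h : Hist S A t) : S := h.1 (Fin.last t)

/-- A Markovian policy viewed as a general policy. -/
def MPolicy.toPolicy {S A : Type} [Fintype A] (m : MPolicy S A) : Policy S A where
  p := fun t h a => m.p t (lastState h) a
  nonneg := fun t h a => m.nonneg t _ a
  sum_one := fun t h => m.sum_one t _

/-- The general policy induced by a deterministic non-Markovian policy
(a function from histories to actions). -/
def detPolicy {S A : Type} [Fintype A] [DecidableEq A] (f : ∀ t : ℕ, Hist S A t → A) :
    Policy S A where
  p := fun t h a => if a = f t h then 1 else 0
  nonneg := by intro t h a; (try dsimp only); split <;> norm_num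
  sum_one := by intro t h; simp

/-- The length-`i` prefix of a history. -/
def histTake {S A : Type} {t : ℕ} (h : Hist S A t) (i : ℕ) (hi : i ≤ t) : Hist S A i :=
  (fun j => h.1 ⟨(j : ℕ), by have := j.isLt; omega⟩,
   fun j => h.2 ⟨(j : ℕ), by have := j.isLt; omega⟩)

/-- The probability that policy `π` generates the history `h` when interacting with
the CMP `M` (initial state from `μ`, actions from `π`, transitions from `P`). -/
noncomputable def histProb {S A : Type} [Fintype S] [Fintype A]
    (M : CMP S A) (π : Policy S A) {t : ℕ} (h : Hist S A t) : ℝ :=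
  M.μ (h.1 0) * ∏ i : Fin t,
    (π.p i (histTake h i (Nat.le_of_lt i.isLt)) (h.2 i) *
      M.P (h.1 i.castSucc) (h.2 i) (h.1 i.succ))

/-- The `t`-step state distribution `d_t^π(s) = Pr(s_t = s)`. -/
noncomputable def stateDist {S A : Type} [Fintype S] [Fintype A] [DecidableEq S]
    (M : CMP S A) (π : Policy S A) (t : ℕ) (s : S) : ℝ :=
  ∑ h : Hist S A t, if lastState h = s then histProb M π h else 0

/-- Shannon entropy of a distribution on a finite set (`0 log 0 = 0` since `Real.log 0 = 0`). -/
noncomputable def entropy {S : Type} [Fintype S] (d : S → ℝ) : ℝ :=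
  -∑ s, d s * Real.log (d s)

/-- The state visitation frequency of a trajectory with `n+1` states. -/
noncomputable def visitFreq {S A : Type} [Fintype S] [DecidableEq S] {n : ℕ}
    (h : Hist S A n) (s : S) : ℝ :=
  (∑ i : Fin (n + 1), if h.1 i = s then (1 : ℝ) else 0) / ((n : ℝ) + 1)

/-- The marginal state distribution `d_T^π(s) = (1/T) ∑_{t<T} d_t^π(s)`. -/
noncomputable def marginalDist {S A : Type} [Fintype S] [Fintype A] [DecidableEq S]
    (M : CMP S A) (π : Policy S A) (T : ℕ) (s : S) : ℝ :=
  (1 / (T : ℝ)) * ∑ t ∈ Finset.range T, stateDist M π t s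

/-- The `γ`-discounted state distribution `d_γ^π(s) = (1-γ) ∑_t γ^t d_t^π(s)`. -/
noncomputable def discountedDist {S A : Type} [Fintype S] [Fintype A] [DecidableEq S]
    (M : CMP S A) (π : Policy S A) (γ : ℝ) (s : S) : ℝ :=
  (1 - γ) * ∑' t : ℕ, γ ^ t * stateDist M π t s

/-- Concatenation of a length-`t` history with a `k`-step continuation. -/
def histAppend {S A : Type} {t k : ℕ} (h : Hist S A t) (c : Contin S A k) : Hist S A (t + k) :=
  (fun j => if hj : (j : ℕ) ≤ t then h.1 ⟨(j : ℕ), by omega⟩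
            else c.2 ⟨(j : ℕ) - t - 1, by have := j.isLt; omega⟩,
   fun j => if hj : (j : ℕ) < t then h.2 ⟨(j : ℕ), hj⟩
            else c.1 ⟨(j : ℕ) - t, by have := j.isLt; omega⟩)

/-- The probability that, after the prefix history `h`, running `π` (conditioned on the
full history) produces the `k`-step continuation `c`. -/
noncomputable def contProb {S A : Type} [Fintype S] [Fintype A]
    (M : CMP S A) (π : Policy S A) {t k : ℕ} (h : Hist S A t) (c : Contin S A k) : ℝ :=
  ∏ i : Fin k,
    (π.p (t + (i : ℕ))
        (histTake (histAppend h c) (t + (i : ℕ)) (by have := i.isLt; omega))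
        ((histAppend h c).2 ⟨t + (i : ℕ), by have := i.isLt; omega⟩) *
      M.P ((histAppend h c).1 ⟨t + (i : ℕ), by have := i.isLt; omega⟩)
        ((histAppend h c).2 ⟨t + (i : ℕ), by have := i.isLt; omega⟩)
        ((histAppend h c).1 ⟨t + (i : ℕ) + 1, by have := i.isLt; omega⟩))

/-- The expected entropy of the state visitation frequency of the completed trajectory,
when running `π` for `k` further steps after the prefix history `h`. -/
noncomputable def expEntFrom {S A : Type} [Fintype S] [Fintype A] [DecidableEq S]
    (M : CMP S A) (π : Policy S A) {t : ℕ} (k : ℕ) (h : Hist S A t) : ℝ :=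
  ∑ c : Contin S A k, contProb M π h c * entropy (visitFreq (histAppend h c))

/-- A history has positive probability (under some policy) iff its initial state and all
its transitions have positive probability. -/
def Reachable {S A : Type} [Fintype S] [Fintype A] (M : CMP S A) {t : ℕ}
    (h : Hist S A t) : Prop :=
  0 < M.μ (h.1 0) ∧ ∀ i : Fin t, 0 < M.P (h.1 i.castSucc) (h.2 i) (h.1 i.succ)

section Aux

variable {S A : Type} [Fintype S] [Fintype A] [DecidableEq S]

/-- Extend a history by one action and one state. -/
def extendH {t : ℕ} (h : Hist S A t) (a : A) (s : S) : Hist S A (t + 1) :=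
  (Fin.snoc h.1 s, Fin.snoc h.2 a)

def histEquiv (S A : Type) (t : ℕ) : (Hist S A t × A × S) ≃ Hist S A (t + 1) where
  toFun := fun x => extendH x.1 x.2.1 x.2.2
  invFun := fun h' => ((Fin.init h'.1, Fin.init h'.2), h'.2 (Fin.last t), h'.1 (Fin.last (t + 1)))
  left_inv := by
    rintro ⟨⟨hs, ha⟩, a, s⟩
    simp [extendH, Fin.init_snoc, Fin.snoc_last]
  right_inv := by
    rintro ⟨hs, ha⟩
    simp [extendH, Fin.snoc_init_self]

lemma lastState_extendH {t : ℕ} (h : Hist S A t) (a : A) (s : S) :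
    lastState (extendH h a s) = s := by
  simp [lastState, extendH, Fin.snoc_last]

lemma histTake_extendH {t : ℕ} (h : Hist S A t) (a : A) (s : S) (i : ℕ) (hi : i ≤ t)
    (hi' : i ≤ t + 1) :
    histTake (extendH h a s) i hi' = histTake h i hi := by
  unfold histTake extendH
  refine Prod.ext (funext fun j => ?_) (funext fun j => ?_)
  · have hj : (j : ℕ) < t + 1 := by have := j.isLt; omega
    show (Fin.snoc h.1 s : Fin (t + 2) → S) ⟨(j : ℕ), by omega⟩ = _
    have : (⟨(j : ℕ), by omega⟩ : Fin (t + 2)) = Fin.castSucc ⟨(j : ℕ), hj⟩ := rfl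
    rw [this, Fin.snoc_castSucc]
  · have hj : (j : ℕ) < t := by have := j.isLt; omega
    show (Fin.snoc h.2 a : Fin (t + 1) → A) ⟨(j : ℕ), by omega⟩ = _
    have : (⟨(j : ℕ), by omega⟩ : Fin (t + 1)) = Fin.castSucc ⟨(j : ℕ), hj⟩ := rfl
    rw [this, Fin.snoc_castSucc]

lemma histTake_self {t : ℕ} (h : Hist S A t) (hle : t ≤ t) : histTake h t hle = h := by
  refine Prod.ext (funext fun j => ?_) (funext fun j => ?_) <;> · show _ = _; congr 1

lemma histProb_extendH (M : CMP S A) (π : Policy S A) {t : ℕ} (h : Hist S A t) (a : A) (s : S) :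
    histProb M π (extendH h a s) = histProb M π h * (π.p t h a * M.P (lastState h) a s) := by
  unfold histProb
  rw [Fin.prod_univ_castSucc]
  have h0 : (extendH h a s).1 0 = h.1 0 := by
    show (Fin.snoc h.1 s : Fin (t + 2) → S) (Fin.castSucc 0) = h.1 0
    rw [Fin.snoc_castSucc]
  rw [h0]
  have hlast : (π.p (↑(Fin.last t))
        (histTake (extendH h a s) (↑(Fin.last t)) (Nat.le_of_lt (Fin.last t).isLt))
        ((extendH h a s).2 (Fin.last t)) *
      M.P ((extendH h a s).1 (Fin.last t).castSucc) ((extendH h a s).2 (Fin.last t))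
        ((extendH h a s).1 (Fin.last t).succ)) = π.p t h a * M.P (lastState h) a s := by
    show (π.p t
        (histTake (extendH h a s) t (Nat.le_of_lt (Fin.last t).isLt))
        ((Fin.snoc h.2 a : Fin (t + 1) → A) (Fin.last t)) *
      M.P ((Fin.snoc h.1 s : Fin (t + 2) → S) (Fin.castSucc (Fin.last t)))
        ((Fin.snoc h.2 a : Fin (t + 1) → A) (Fin.last t))
        ((Fin.snoc h.1 s : Fin (t + 2) → S) (Fin.last (t + 1)))) = _
    rw [Fin.snoc_last, Fin.snoc_last, Fin.snoc_castSucc,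
      histTake_extendH h a s t le_rfl, histTake_self]
    rfl
  rw [hlast]
  have hcast : ∀ i : Fin t,
      (π.p (↑(Fin.castSucc i))
          (histTake (extendH h a s) (↑(Fin.castSucc i)) (Nat.le_of_lt (Fin.castSucc i).isLt))
          ((extendH h a s).2 (Fin.castSucc i)) *
        M.P ((extendH h a s).1 (Fin.castSucc i).castSucc) ((extendH h a s).2 (Fin.castSucc i))
          ((extendH h a s).1 (Fin.castSucc i).succ)) =
      (π.p ↑i (histTake h ↑i (Nat.le_of_lt i.isLt)) (h.2 i) *
        M.P (h.1 i.castSucc) (h.2 i) (h.1 i.succ)) := by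
    intro i
    show (π.p ↑i
          (histTake (extendH h a s) ↑i (Nat.le_of_lt (Fin.castSucc i).isLt))
          ((Fin.snoc h.2 a : Fin (t + 1) → A) (Fin.castSucc i)) *
        M.P ((Fin.snoc h.1 s : Fin (t + 2) → S) (Fin.castSucc (Fin.castSucc i)))
          ((Fin.snoc h.2 a : Fin (t + 1) → A) (Fin.castSucc i))
          ((Fin.snoc h.1 s : Fin (t + 2) → S) (Fin.castSucc i).succ)) = _
    rw [Fin.succ_castSucc, Fin.snoc_castSucc, Fin.snoc_castSucc, Fin.snoc_castSucc,
      histTake_extendH h a s ↑i (Nat.le_of_lt i.isLt)]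
  rw [Finset.prod_congr rfl (fun i _ => hcast i)]
  ring

lemma histProb_nonneg (M : CMP S A) (π : Policy S A) {t : ℕ} (h : Hist S A t) :
    0 ≤ histProb M π h := by
  unfold histProb
  apply mul_nonneg (M.μ_nonneg _)
  exact Finset.prod_nonneg fun i _ => mul_nonneg (π.nonneg _ _ _) (M.P_nonneg _ _ _)

lemma stateDist_nonneg (M : CMP S A) (π : Policy S A) (t : ℕ) (s : S) :
    0 ≤ stateDist M π t s := by
  apply Finset.sum_nonneg
  intro h _
  split <;> simp [histProb_nonneg]

lemma stateDist_zero (M : CMP S A) (π : Policy S A) (s : S) :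
    stateDist M π 0 s = M.μ s := by
  unfold stateDist histProb lastState
  rw [Fintype.sum_prod_type]
  simp only [Finset.univ_unique, Finset.sum_singleton, Fin.prod_univ_zero, mul_one]
  rw [Fintype.sum_equiv (Equiv.funUnique (Fin 1) S)
    (fun x : Fin 1 → S => if x (Fin.last 0) = s then M.μ (x 0) else 0)
    (fun y : S => if y = s then M.μ y else 0) (fun x => rfl)]
  rw [Finset.sum_ite_eq' Finset.univ s]
  simp

/-- The `t`-step state-action distribution. -/
noncomputable def sad (M : CMP S A) (π : Policy S A) (t : ℕ) (s : S) (a : A) : ℝ :=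
  ∑ h : Hist S A t, if lastState h = s then histProb M π h * π.p t h a else 0

lemma sad_nonneg (M : CMP S A) (π : Policy S A) (t : ℕ) (s : S) (a : A) :
    0 ≤ sad M π t s a := by
  apply Finset.sum_nonneg
  intro h _
  split
  · exact mul_nonneg (histProb_nonneg M π h) (π.nonneg _ _ _)
  · exact le_refl 0

lemma sum_sad (M : CMP S A) (π : Policy S A) (t : ℕ) (s : S) :
    ∑ a, sad M π t s a = stateDist M π t s := by
  unfold sad stateDist
  rw [Finset.sum_comm]
  refine Finset.sum_congr rfl fun h _ => ?_
  split
  · rw [← Finset.mul_sum, π.sum_one, mul_one]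
  · simp

lemma stateDist_succ (M : CMP S A) (π : Policy S A) (t : ℕ) (s' : S) :
    stateDist M π (t + 1) s' = ∑ s, ∑ a, sad M π t s a * M.P s a s' := by
  have lhs : stateDist M π (t + 1) s'
      = ∑ h : Hist S A t, ∑ a, histProb M π h * π.p t h a * M.P (lastState h) a s' := by
    unfold stateDist
    rw [← Fintype.sum_equiv (histEquiv S A t)
      (fun x => if lastState (histEquiv S A t x) = s' then histProb M π (histEquiv S A t x) else 0)
      (fun h' => if lastState h' = s' then histProb M π h' else 0) (fun x => rfl)]
    rw [Fintype.sum_prod_type]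
    refine Finset.sum_congr rfl fun h _ => ?_
    rw [Fintype.sum_prod_type]
    refine Finset.sum_congr rfl fun a _ => ?_
    have key : ∀ s : S,
        (if lastState (histEquiv S A t (h, a, s)) = s'
          then histProb M π (histEquiv S A t (h, a, s)) else 0)
        = (if s = s' then histProb M π h * π.p t h a * M.P (lastState h) a s else 0) := by
      intro s
      show (if lastState (extendH h a s) = s' then histProb M π (extendH h a s) else 0) = _
      rw [lastState_extendH, histProb_extendH]
      simp [mul_assoc]
    rw [Finset.sum_congr rfl fun s _ => key s, Finset.sum_ite_eq' Finset.univ s']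
    simp
  rw [lhs]
  have rhs : ∀ s a, sad M π t s a * M.P s a s'
      = ∑ h : Hist S A t,
          (if lastState h = s then histProb M π h * π.p t h a * M.P (lastState h) a s' else 0) := by
    intro s a
    unfold sad
    rw [Finset.sum_mul]
    refine Finset.sum_congr rfl fun h _ => ?_
    by_cases hc : lastState h = s
    · simp [hc, mul_assoc]
    · simp [hc]
  have inner : ∀ a, ∑ h : Hist S A t, histProb M π h * π.p t h a * M.P (lastState h) a s'
      = ∑ s, ∑ h : Hist S A t,
          (if lastState h = s then histProb M π h * π.p t h a * M.P (lastState h) a s' else 0) := by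
    intro a
    rw [Finset.sum_comm]
    refine Finset.sum_congr rfl fun h _ => ?_
    rw [Finset.sum_ite_eq Finset.univ (lastState h)]
    simp
  calc ∑ h : Hist S A t, ∑ a, histProb M π h * π.p t h a * M.P (lastState h) a s'
      = ∑ a, ∑ h : Hist S A t, histProb M π h * π.p t h a * M.P (lastState h) a s' :=
        Finset.sum_comm
    _ = ∑ a, ∑ s, ∑ h : Hist S A t,
          (if lastState h = s then histProb M π h * π.p t h a * M.P (lastState h) a s' else 0) :=
        Finset.sum_congr rfl fun a _ => inner a
    _ = ∑ s, ∑ a, ∑ h : Hist S A t,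
          (if lastState h = s then histProb M π h * π.p t h a * M.P (lastState h) a s' else 0) :=
        Finset.sum_comm
    _ = ∑ s, ∑ a, sad M π t s a * M.P s a s' := by
        refine Finset.sum_congr rfl fun s _ => Finset.sum_congr rfl fun a _ => (rhs s a).symm

lemma sad_markov (M : CMP S A) (m : MPolicy S A) (t : ℕ) (s : S) (a : A) :
    sad M m.toPolicy t s a = stateDist M m.toPolicy t s * m.p t s a := by
  unfold sad stateDist
  rw [Finset.sum_mul]
  refine Finset.sum_congr rfl fun h _ => ?_
  by_cases hc : lastState h = s
  · simp [MPolicy.toPolicy, hc]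
  · simp [hc]

open scoped Classical in
/-- The transition rule of the matching Markovian policy. -/
noncomputable def matchP (M : CMP S A) (π : Policy S A) (t : ℕ) (s : S) (a : A) : ℝ :=
  if stateDist M π t s = 0 then (Fintype.card A : ℝ)⁻¹
  else sad M π t s a / stateDist M π t s

noncomputable def matchMP [Nonempty A] (M : CMP S A) (π : Policy S A) : MPolicy S A where
  p := matchP M π
  nonneg := by
    intro t s a
    unfold matchP
    split
    · positivity
    · exact div_nonneg (sad_nonneg M π t s a) (stateDist_nonneg M π t s)
  sum_one := by
    intro t s
    unfold matchP
    split
    · rw [Finset.sum_const, Finset.card_univ, nsmul_eq_mul, mul_inv_cancel₀]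
      exact_mod_cast Fintype.card_ne_zero
    · rw [← Finset.sum_div, sum_sad, div_self ‹_›]

end Aux

/-- For every CMP and every (possibly non-Markovian, possibly randomized)
policy `π`, there exists a Markovian policy `π'` whose `t`-step state distributions
coincide with those of `π` for every `t` and every state. -/
theorem markovian_policy_matches_all_state_distributions
    {S A : Type} [Fintype S] [Fintype A] [Nonempty S] [Nonempty A] [DecidableEq S]
    (M : CMP S A) (π : Policy S A) :
    ∃ π' : MPolicy S A, ∀ (t : ℕ) (s : S),
      stateDist M π'.toPolicy t s = stateDist M π t s := by
  classical
  refine ⟨matchMP M π, ?_⟩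
  intro t
  induction t with
  | zero => intro s; rw [stateDist_zero, stateDist_zero]
  | succ t ih =>
    intro s'
    rw [stateDist_succ, stateDist_succ]
    refine Finset.sum_congr rfl fun s _ => Finset.sum_congr rfl fun a _ => ?_
    congr 1
    rw [sad_markov, ih s]
    show stateDist M π t s * matchP M π t s a = sad M π t s a
    by_cases hd : stateDist M π t s = 0
    · rw [hd, zero_mul]
      have h1 : ∑ a, sad M π t s a = 0 := by rw [sum_sad, hd]
      exact ((Finset.sum_eq_zero_iff_of_nonneg
        (fun a _ => sad_nonneg M π t s a)).mp h1 a (Finset.mem_univ a)).symm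
    · unfold matchP
      rw [if_neg hd, mul_comm, div_mul_cancel₀ _ hd]
end

section
/- For every controlled Markov process and every horizon T ≥ 1, there exists a deterministic non-Markovian policy π (a deterministic function from histories to actions) such that E(π) equals the supremum of E(π') over all (possibly non-Markovian, possibly randomized) policies π'; that is, deterministic history-dependent policies suffice to maximize the finite-sample entropy objective. -/
open scoped BigOperators

section AuxEntropy

lemma abstract_sum {ι κ A : Type} [Fintype ι] [Fintype κ] [Fintype A]
    [DecidableEq ι] [DecidableEq κ] [DecidableEq A]
    (e : ι → κ) (he : Function.Injective e)
    (p : κ → A → ℝ) (hp : ∀ k, ∑ a, p k a = 1)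
    (q : ι → A → ℝ) :
    ∑ g : κ → A, (∏ k, p k (g k)) * ∏ i, q i (g (e i))
      = ∏ i, ∑ a, p (e i) a * q i a := by
  classical
  set F : κ → A → ℝ := fun k a => p k a * ∏ i, if e i = k then q i a else 1 with hF
  have h1 : ∀ g : κ → A, (∏ k, p k (g k)) * ∏ i, q i (g (e i)) = ∏ k, F k (g k) := by
    intro g
    simp only [hF, Finset.prod_mul_distrib]
    congr 1
    rw [Finset.prod_comm]
    apply Finset.prod_congr rfl
    intro i _
    simp
  have h2 : ∑ g : κ → A, ∏ k, F k (g k) = ∏ k, ∑ a, F k a := by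
    rw [Finset.prod_univ_sum, ← Fintype.piFinset_univ]
  have h3 : ∀ i, ∑ a, F (e i) a = ∑ a, p (e i) a * q i a := by
    intro i
    apply Finset.sum_congr rfl
    intro a _
    simp only [hF]
    congr 1
    have : ∀ i' : ι, (if e i' = e i then q i' a else 1) = (if i' = i then q i' a else 1) := by
      intro i'; simp [he.eq_iff]
    rw [Finset.prod_congr rfl (fun i' _ => this i')]
    simp
  have h4 : ∀ k, k ∉ Finset.image e Finset.univ → ∑ a, F k a = 1 := by
    intro k hk
    have : ∀ a, F k a = p k a := by
      intro a
      simp only [hF]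
      have : ∀ i : ι, (if e i = k then q i a else 1) = 1 := by
        intro i
        rw [if_neg]
        intro hek
        exact hk (Finset.mem_image.2 ⟨i, Finset.mem_univ i, hek⟩)
      rw [Finset.prod_congr rfl (fun i _ => this i)]
      simp
    simp only [this]; exact hp k
  calc ∑ g : κ → A, (∏ k, p k (g k)) * ∏ i, q i (g (e i))
      = ∑ g : κ → A, ∏ k, F k (g k) := Finset.sum_congr rfl (fun g _ => h1 g)
    _ = ∏ k, ∑ a, F k a := h2
    _ = ∏ k ∈ Finset.image e Finset.univ, ∑ a, F k a := by
        rw [Finset.prod_subset (Finset.subset_univ _) (fun k _ hk => h4 k hk)]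
    _ = ∏ i, ∑ a, F (e i) a := by
        rw [Finset.prod_image (fun x _ y _ hxy => he hxy)]
    _ = ∏ i, ∑ a, p (e i) a * q i a := Finset.prod_congr rfl (fun i _ => h3 i)

/-- Relevant decision points: time `t < n` together with a history of length `t`. -/
abbrev DecPt (S A : Type) (n : ℕ) : Type := Σ t : Fin n, Hist S A t

/-- The deterministic history-dependent policy induced by a choice of action at each
relevant decision point. -/
noncomputable def toFun {S A : Type} [Nonempty A] {n : ℕ} (g : DecPt S A n → A) :
    ∀ t : ℕ, Hist S A t → A :=
  fun t h => if ht : t < n then g ⟨⟨t, ht⟩, h⟩ else Classical.arbitrary A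

lemma hist_decomp {S A : Type} [Fintype S] [Fintype A] [Nonempty A]
    [DecidableEq S] [DecidableEq A]
    (M : CMP S A) (π : Policy S A) {n : ℕ} (h : Hist S A n) :
    ∑ g : DecPt S A n → A,
        (∏ r : DecPt S A n, π.p r.1 r.2 (g r)) * histProb M (detPolicy (toFun g)) h
      = histProb M π h := by
  classical
  set e : Fin n → DecPt S A n := fun i => ⟨i, histTake h i (Nat.le_of_lt i.isLt)⟩ with he_def
  have he : Function.Injective e := by
    intro i j hij
    simpa [he_def] using congrArg Sigma.fst hij
  have hdet : ∀ g : DecPt S A n → A, histProb M (detPolicy (toFun g)) h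
      = M.μ (h.1 0) * ((∏ i : Fin n, (if h.2 i = g (e i) then (1:ℝ) else 0)) *
          ∏ i : Fin n, M.P (h.1 i.castSucc) (h.2 i) (h.1 i.succ)) := by
    intro g
    rw [histProb, ← Finset.prod_mul_distrib]
    congr 1
    apply Finset.prod_congr rfl
    intro i _
    congr 1
    show (if h.2 i = toFun g i (histTake h i (Nat.le_of_lt i.isLt)) then (1:ℝ) else 0) = _
    rw [toFun, dif_pos i.isLt]
  have hkey := abstract_sum e he (fun r a => π.p r.1 r.2 a) (fun r => π.sum_one r.1 r.2)
      (fun i a => if h.2 i = a then (1:ℝ) else 0)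
  calc ∑ g : DecPt S A n → A,
        (∏ r : DecPt S A n, π.p r.1 r.2 (g r)) * histProb M (detPolicy (toFun g)) h
      = ∑ g : DecPt S A n → A,
          (M.μ (h.1 0) * ∏ i : Fin n, M.P (h.1 i.castSucc) (h.2 i) (h.1 i.succ)) *
          ((∏ r : DecPt S A n, π.p r.1 r.2 (g r)) *
            ∏ i : Fin n, (if h.2 i = g (e i) then (1:ℝ) else 0)) := by
        apply Finset.sum_congr rfl
        intro g _
        rw [hdet g]; ring
    _ = (M.μ (h.1 0) * ∏ i : Fin n, M.P (h.1 i.castSucc) (h.2 i) (h.1 i.succ)) *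
          ∑ g : DecPt S A n → A, (∏ r : DecPt S A n, π.p r.1 r.2 (g r)) *
            ∏ i : Fin n, (if h.2 i = g (e i) then (1:ℝ) else 0) := by
        rw [Finset.mul_sum]
    _ = (M.μ (h.1 0) * ∏ i : Fin n, M.P (h.1 i.castSucc) (h.2 i) (h.1 i.succ)) *
          ∏ i : Fin n, ∑ a : A, π.p (e i).1 (e i).2 a * (if h.2 i = a then (1:ℝ) else 0) := by
        rw [hkey]
    _ = (M.μ (h.1 0) * ∏ i : Fin n, M.P (h.1 i.castSucc) (h.2 i) (h.1 i.succ)) *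
          ∏ i : Fin n, π.p i (histTake h i (Nat.le_of_lt i.isLt)) (h.2 i) := by
        congr 1
        apply Finset.prod_congr rfl
        intro i _
        simp [he_def, mul_ite, eq_comm]
        rfl
    _ = histProb M π h := by
        rw [histProb, Finset.prod_mul_distrib]; ring

end AuxEntropy

lemma w_sum_one {S A : Type} [Fintype S] [Fintype A]
    [DecidableEq S] [DecidableEq A] (π : Policy S A) (n : ℕ) :
    ∑ g : DecPt S A n → A, ∏ r : DecPt S A n, π.p r.1 r.2 (g r) = 1 := by
  classical
  have h2 : ∑ g : DecPt S A n → A, ∏ r : DecPt S A n, π.p r.1 r.2 (g r)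
      = ∏ r : DecPt S A n, ∑ a : A, π.p r.1 r.2 a := by
    rw [Finset.prod_univ_sum, ← Fintype.piFinset_univ]
  rw [h2]
  exact Finset.prod_eq_one fun r _ => π.sum_one r.1 r.2


/-- for every horizon `T ≥ 1` there exists a deterministic non-Markovian
policy (a deterministic function from histories to actions) whose finite-sample entropy
objective attains the supremum over all (possibly randomized) policies. -/
theorem deterministic_nonMarkovian_sufficient_for_finite_sample_entropy
    {S A : Type} [Fintype S] [Fintype A] [Nonempty S] [Nonempty A]
    [DecidableEq S] [DecidableEq A]
    (M : CMP S A) (T : ℕ) (hT : 1 ≤ T) :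
    ∃ f : ∀ t : ℕ, Hist S A t → A,
      (∑ h : Hist S A (T - 1), histProb M (detPolicy f) h * entropy (visitFreq h))
        = ⨆ π' : Policy S A,
            ∑ h : Hist S A (T - 1), histProb M π' h * entropy (visitFreq h) := by
  classical
  set n := T - 1 with hn
  set V : (DecPt S A n → A) → ℝ := fun g =>
    ∑ h : Hist S A n, histProb M (detPolicy (toFun g)) h * entropy (visitFreq h) with hV
  obtain ⟨g₀, hg₀⟩ := Finite.exists_max V
  haveI : Nonempty (Policy S A) := ⟨detPolicy (toFun g₀)⟩
  have key : ∀ π : Policy S A,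
      ∑ h : Hist S A n, histProb M π h * entropy (visitFreq h) ≤ V g₀ := by
    intro π
    have hdec : ∑ h : Hist S A n, histProb M π h * entropy (visitFreq h)
        = ∑ g : DecPt S A n → A, (∏ r : DecPt S A n, π.p r.1 r.2 (g r)) * V g := by
      calc ∑ h : Hist S A n, histProb M π h * entropy (visitFreq h)
          = ∑ h : Hist S A n, (∑ g : DecPt S A n → A,
              (∏ r : DecPt S A n, π.p r.1 r.2 (g r)) * histProb M (detPolicy (toFun g)) h)
              * entropy (visitFreq h) := by
            apply Finset.sum_congr rfl
            intro h _
            rw [hist_decomp M π h]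
        _ = ∑ h : Hist S A n, ∑ g : DecPt S A n → A,
              (∏ r : DecPt S A n, π.p r.1 r.2 (g r)) *
                (histProb M (detPolicy (toFun g)) h * entropy (visitFreq h)) := by
            apply Finset.sum_congr rfl
            intro h _
            rw [Finset.sum_mul]
            apply Finset.sum_congr rfl
            intro g _
            ring
        _ = ∑ g : DecPt S A n → A, (∏ r : DecPt S A n, π.p r.1 r.2 (g r)) * V g := by
            rw [Finset.sum_comm]
            apply Finset.sum_congr rfl
            intro g _
            rw [hV, Finset.mul_sum]
    rw [hdec]
    have hw0 : ∀ g : DecPt S A n → A, 0 ≤ ∏ r : DecPt S A n, π.p r.1 r.2 (g r) :=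
      fun g => Finset.prod_nonneg fun r _ => π.nonneg r.1 r.2 (g r)
    calc ∑ g : DecPt S A n → A, (∏ r : DecPt S A n, π.p r.1 r.2 (g r)) * V g
        ≤ ∑ g : DecPt S A n → A, (∏ r : DecPt S A n, π.p r.1 r.2 (g r)) * V g₀ :=
          Finset.sum_le_sum fun g _ => mul_le_mul_of_nonneg_left (hg₀ g) (hw0 g)
      _ = V g₀ := by rw [← Finset.sum_mul, w_sum_one, one_mul]
  refine ⟨toFun g₀, le_antisymm ?_ ?_⟩
  · exact le_ciSup ⟨V g₀, by rintro x ⟨π, rfl⟩; exact key π⟩ (detPolicy (toFun g₀))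
  · exact ciSup_le key
end

section
/- Consider a controlled Markov process with a deterministic transition function f : S × A → S, a horizon T ≥ 1, a time t < T, and a prefix trajectory h_t of length t ending in state s_t. Let H* be the maximum of H(d_{h_t ⊕ h'}) over all feasible length-(T−t) continuations h' from s_t (continuations generated by action sequences via f). Assume there is a unique action a* ∈ A such that some continuation whose first action is a* attains H*, and assume some feasible continuation has first action different from a*. Then every Markovian policy π_M for which E_{h'∼p_{T−t}^{π_M}}[H(d_{h_t ⊕ h'})] attains the maximum over Markovian policies and which satisfies π_M(a*|s_t, t) < 1 (i.e. is randomized at (s_t, t)) has strictly positive expected regret-to-go: R_{T−t}(π_M, h_t) > 0. -/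
open scoped BigOperators

/-- In a CMP with deterministic transition function `f`, a continuation `c` after the
prefix `h` is feasible if each of its states is obtained from the previous state and
the chosen action via `f`. -/
def FeasibleCont {S A : Type} (f : S → A → S) {t k : ℕ}
    (h : Hist S A t) (c : Contin S A k) : Prop :=
  ∀ i : Fin k,
    (histAppend h c).1 ⟨t + (i : ℕ) + 1, by have := i.isLt; omega⟩
      = f ((histAppend h c).1 ⟨t + (i : ℕ), by have := i.isLt; omega⟩)
          ((histAppend h c).2 ⟨t + (i : ℕ), by have := i.isLt; omega⟩)

namespace MyAux

variable {S A : Type}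

/-- The deterministic state sequence generated by running actions `α` from `s0`. -/
def stOf (f : S → A → S) : ∀ (k : ℕ), S → (Fin k → A) → Fin k → S
  | 0, _, _ => Fin.elim0
  | k+1, s0, α => Fin.cons (f s0 (α 0)) (stOf f k (f s0 (α 0)) (Fin.tail α))

/-- The product of Markovian action probabilities along a trajectory. -/
def wOf (g : ℕ → S → A → ℝ) (f : S → A → S) : ∀ (k : ℕ), ℕ → S → (Fin k → A) → ℝ
  | 0, _, _, _ => 1
  | k+1, m, s0, α => g m s0 (α 0) * wOf g f k (m+1) (f s0 (α 0)) (Fin.tail α)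

lemma stOf_step (f : S → A → S) : ∀ (k : ℕ) (s0 : S) (α : Fin k → A) (i : Fin k),
    stOf f k s0 α i = f ((Fin.cons s0 (stOf f k s0 α) : Fin (k+1) → S) i.castSucc) (α i) := by
  intro k
  induction k with
  | zero => intro s0 α i; exact i.elim0
  | succ k ih =>
    intro s0 α i
    refine Fin.cases ?_ ?_ i
    · simp [stOf]
    · intro j
      have h1 : (j.succ).castSucc = (j.castSucc).succ := by
        ext; simp
      rw [h1]
      simp only [stOf, Fin.cons_succ]
      rw [ih (f s0 (α 0)) (Fin.tail α) j]
      rfl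

lemma cons_stOf_eq (f : S → A → S) (k : ℕ) (s0 : S) (α : Fin k → A) (σ : Fin k → S)
    (hσ : ∀ i : Fin k, σ i = f ((Fin.cons s0 σ : Fin (k+1) → S) i.castSucc) (α i)) :
    σ = stOf f k s0 α := by
  induction k generalizing s0 with
  | zero => funext i; exact i.elim0
  | succ k ih =>
    have h0 : σ 0 = f s0 (α 0) := by simpa using hσ 0
    have htail : Fin.tail σ = stOf f k (f s0 (α 0)) (Fin.tail α) := by
      apply ih
      intro i
      have := hσ i.succ
      have h1 : (i.succ).castSucc = (i.castSucc).succ := by ext; simp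
      rw [h1, Fin.cons_succ] at this
      have h2 : Fin.cons (f s0 (α 0)) (Fin.tail σ) = σ := by
        rw [← h0]; exact Fin.cons_self_tail σ
      rw [Fin.tail, this, ← h2]
      simp [Fin.tail, Fin.cons_succ]
    calc σ = Fin.cons (σ 0) (Fin.tail σ) := (Fin.cons_self_tail σ).symm
    _ = stOf f (k+1) s0 α := by rw [h0, htail]; rfl

lemma wOf_eq_prod (g : ℕ → S → A → ℝ) (f : S → A → S) :
    ∀ (k m : ℕ) (s0 : S) (α : Fin k → A),
    wOf g f k m s0 α
      = ∏ i : Fin k, g (m + (i : ℕ)) ((Fin.cons s0 (stOf f k s0 α) : Fin (k+1) → S) i.castSucc) (α i) := by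
  intro k
  induction k with
  | zero => intro m s0 α; simp [wOf]
  | succ k ih =>
    intro m s0 α
    rw [Fin.prod_univ_succ]
    have hw : wOf g f (k+1) m s0 α = g m s0 (α 0) * wOf g f k (m+1) (f s0 (α 0)) (Fin.tail α) := rfl
    rw [hw, ih]
    simp only [Fin.castSucc_zero, Fin.cons_zero, Fin.val_zero, Nat.add_zero]
    congr 1
    apply Finset.prod_congr rfl
    intro j _
    have h1 : (j.succ).castSucc = (j.castSucc).succ := by ext; simp
    rw [h1]
    simp only [stOf, Fin.cons_succ, Fin.tail, Fin.val_succ]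
    congr 1
    omega

lemma wOf_nonneg (g : ℕ → S → A → ℝ) (f : S → A → S) (hg : ∀ m s a, 0 ≤ g m s a) :
    ∀ (k m : ℕ) (s0 : S) (α : Fin k → A), 0 ≤ wOf g f k m s0 α := by
  intro k
  induction k with
  | zero => intro m s0 α; exact zero_le_one
  | succ k ih => intro m s0 α; exact mul_nonneg (hg _ _ _) (ih _ _ _)

lemma wOf_cons (g : ℕ → S → A → ℝ) (f : S → A → S) (k m : ℕ) (s0 : S) (a : A)
    (β : Fin k → A) :
    wOf g f (k+1) m s0 (Fin.cons a β) = g m s0 a * wOf g f k (m+1) (f s0 a) β := by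
  simp [wOf]

lemma wOf_sum [Fintype A] (g : ℕ → S → A → ℝ) (f : S → A → S)
    (hg : ∀ m s, ∑ a, g m s a = 1) :
    ∀ (k m : ℕ) (s0 : S), ∑ α : Fin k → A, wOf g f k m s0 α = 1 := by
  intro k
  induction k with
  | zero =>
    intro m s0
    simp [wOf]
  | succ k ih =>
    intro m s0
    rw [← (Fin.consEquiv (fun _ : Fin (k+1) => A)).sum_comp (wOf g f (k+1) m s0)]
    rw [Fintype.sum_prod_type]
    have : ∀ a : A, ∀ β : Fin k → A,
        wOf g f (k+1) m s0 ((Fin.consEquiv (fun _ : Fin (k+1) => A)) (a, β))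
          = g m s0 a * wOf g f k (m+1) (f s0 a) β := by
      intro a β
      have he : ((Fin.consEquiv fun _ : Fin (k+1) => A) (a, β)) = Fin.cons a β := rfl
      rw [he, wOf_cons]
    simp only [this]
    rw [← hg m s0]
    apply Finset.sum_congr rfl
    intro a _
    rw [← Finset.mul_sum, ih, mul_one]

lemma wOf_exists_pos [Fintype A] (g : ℕ → S → A → ℝ) (f : S → A → S)
    (hg0 : ∀ m s a, 0 ≤ g m s a) (hg : ∀ m s, ∑ a, g m s a = 1)
    (k m : ℕ) (s0 : S) (a : A) (ha : 0 < g m s0 a) :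
    ∃ α : Fin (k+1) → A, α 0 = a ∧ 0 < wOf g f (k+1) m s0 α := by
  have h1 : ∑ β : Fin k → A, wOf g f k (m+1) (f s0 a) β = 1 := wOf_sum g f hg k (m+1) (f s0 a)
  have h2 : ∃ β ∈ Finset.univ, wOf g f k (m+1) (f s0 a) β ≠ 0 := by
    apply Finset.exists_ne_zero_of_sum_ne_zero
    rw [h1]; norm_num
  obtain ⟨β, _, hβ⟩ := h2
  have hβpos : 0 < wOf g f k (m+1) (f s0 a) β := lt_of_le_of_ne (wOf_nonneg g f hg0 _ _ _ _) (Ne.symm hβ)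
  refine ⟨Fin.cons a β, rfl, ?_⟩
  rw [wOf_cons]
  exact mul_pos ha hβpos



section Main

lemma histAppend_fst_succ {t k : ℕ} (h : Hist S A t) (c : Contin S A k) (i : Fin k)
    (pf : t + (i : ℕ) + 1 < t + k + 1) :
    (histAppend h c).1 ⟨t + (i : ℕ) + 1, pf⟩ = c.2 i := by
  show dite _ _ _ = _
  rw [dif_neg (show ¬ (t + (i : ℕ) + 1 ≤ t) by omega)]
  exact congrArg c.2 (Fin.ext (by simp only [Fin.val_mk]; omega))

lemma histAppend_fst_cast {t k : ℕ} (h : Hist S A t) (c : Contin S A k) (i : Fin k)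
    (pf : t + (i : ℕ) < t + k + 1) :
    (histAppend h c).1 ⟨t + (i : ℕ), pf⟩
      = (Fin.cons (lastState h) c.2 : Fin (k+1) → S) i.castSucc := by
  by_cases hi : (i : ℕ) = 0
  · have h1 : i.castSucc = 0 := by apply Fin.ext; simpa using hi
    rw [h1, Fin.cons_zero]
    show dite _ _ _ = _
    rw [dif_pos (show t + (i : ℕ) ≤ t by omega)]
    show h.1 _ = h.1 (Fin.last t)
    exact congrArg h.1 (Fin.ext (by simp only [Fin.val_mk, Fin.val_last]; omega))
  · have h1 : i.castSucc = (⟨(i : ℕ) - 1, by have := i.isLt; omega⟩ : Fin k).succ := by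
      apply Fin.ext
      show (i : ℕ) = (i : ℕ) - 1 + 1
      omega
    rw [h1, Fin.cons_succ]
    show dite _ _ _ = _
    rw [dif_neg (show ¬ (t + (i : ℕ) ≤ t) by omega)]
    exact congrArg c.2 (Fin.ext (by simp only [Fin.val_mk]; omega))

lemma histAppend_snd' {t k : ℕ} (h : Hist S A t) (c : Contin S A k) (i : Fin k)
    (pf : t + (i : ℕ) < t + k) :
    (histAppend h c).2 ⟨t + (i : ℕ), pf⟩ = c.1 i := by
  show dite _ _ _ = _
  rw [dif_neg (show ¬ (t + (i : ℕ) < t) by omega)]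
  exact congrArg c.1 (Fin.ext (by simp only [Fin.val_mk]; omega))

lemma lastState_histTake {t k : ℕ} (h : Hist S A t) (c : Contin S A k) (i : Fin k)
    (pf : t + (i : ℕ) ≤ t + k) (pf2 : t + (i : ℕ) < t + k + 1) :
    lastState (histTake (histAppend h c) (t + (i : ℕ)) pf)
      = (histAppend h c).1 ⟨t + (i : ℕ), pf2⟩ := rfl

variable [Fintype S] [Fintype A] [DecidableEq S] [DecidableEq A]

lemma contProb_markov (M : CMP S A) (f : S → A → S)
    (hdet : ∀ s a s', M.P s a s' = if s' = f s a then 1 else 0)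
    (πM : MPolicy S A) {t k : ℕ} (h : Hist S A t) (c : Contin S A k) :
    contProb M πM.toPolicy h c =
      if c.2 = stOf f k (lastState h) c.1 then wOf πM.p f k t (lastState h) c.1 else 0 := by
  have step1 : contProb M πM.toPolicy h c = ∏ i : Fin k,
      (πM.p (t + (i : ℕ)) ((Fin.cons (lastState h) c.2 : Fin (k+1) → S) i.castSucc) (c.1 i) *
        (if c.2 i = f ((Fin.cons (lastState h) c.2 : Fin (k+1) → S) i.castSucc) (c.1 i)
          then 1 else 0)) := by
    unfold contProb
    apply Finset.prod_congr rfl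
    intro i _
    simp only [MPolicy.toPolicy]
    rw [lastState_histTake h c i _ (by omega)]
    rw [hdet, histAppend_fst_succ, histAppend_fst_cast, histAppend_snd']
  by_cases hfeas : c.2 = stOf f k (lastState h) c.1
  · rw [if_pos hfeas, step1]
    have hone : ∀ i : Fin k,
        (if c.2 i = f ((Fin.cons (lastState h) c.2 : Fin (k+1) → S) i.castSucc) (c.1 i)
          then (1:ℝ) else 0) = 1 := by
      intro i
      rw [if_pos]
      rw [hfeas]
      exact stOf_step f k (lastState h) c.1 i
    calc ∏ i : Fin k, (πM.p (t + (i : ℕ)) ((Fin.cons (lastState h) c.2 : Fin (k+1) → S) i.castSucc) (c.1 i) *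
        (if c.2 i = f ((Fin.cons (lastState h) c.2 : Fin (k+1) → S) i.castSucc) (c.1 i) then 1 else 0))
        = ∏ i : Fin k, πM.p (t + (i : ℕ)) ((Fin.cons (lastState h) c.2 : Fin (k+1) → S) i.castSucc) (c.1 i) := by
          apply Finset.prod_congr rfl
          intro i _
          rw [hone i, mul_one]
      _ = wOf πM.p f k t (lastState h) c.1 := by
          rw [wOf_eq_prod, hfeas]
  · rw [if_neg hfeas, step1]
    have hex : ∃ i : Fin k,
        ¬ (c.2 i = f ((Fin.cons (lastState h) c.2 : Fin (k+1) → S) i.castSucc) (c.1 i)) := by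
      by_contra hcon
      push_neg at hcon
      exact hfeas (cons_stOf_eq f k (lastState h) c.1 c.2 hcon)
    obtain ⟨i, hi⟩ := hex
    apply Finset.prod_eq_zero (Finset.mem_univ i)
    rw [if_neg hi, mul_zero]

lemma feasible_stOf (f : S → A → S) {t k : ℕ} (h : Hist S A t) (α : Fin k → A) :
    FeasibleCont f h (α, stOf f k (lastState h) α) := by
  intro i
  rw [histAppend_fst_succ, histAppend_fst_cast, histAppend_snd']
  exact stOf_step f k (lastState h) α i

lemma expEnt_markov (M : CMP S A) (f : S → A → S)
    (hdet : ∀ s a s', M.P s a s' = if s' = f s a then 1 else 0)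
    (πM : MPolicy S A) {t : ℕ} (k : ℕ) (h : Hist S A t) :
    expEntFrom M πM.toPolicy k h
      = ∑ α : Fin k → A, wOf πM.p f k t (lastState h) α *
          entropy (visitFreq (histAppend h (α, stOf f k (lastState h) α))) := by
  rw [expEntFrom, Fintype.sum_prod_type]
  apply Finset.sum_congr rfl
  intro α _
  have key : ∀ σ' : Fin k → S,
      contProb M πM.toPolicy h (α, σ') * entropy (visitFreq (histAppend h (α, σ')))
        = if σ' = stOf f k (lastState h) α
            then wOf πM.p f k t (lastState h) α * entropy (visitFreq (histAppend h (α, σ')))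
            else 0 := by
    intro σ'
    rw [contProb_markov M f hdet πM h (α, σ')]
    by_cases hc : σ' = stOf f k (lastState h) α
    · rw [if_pos hc, if_pos hc]
    · rw [if_neg hc, if_neg hc, zero_mul]
  rw [Finset.sum_congr rfl (fun σ' _ => key σ')]
  rw [Finset.sum_ite_eq' Finset.univ (stOf f k (lastState h) α)]
  simp

lemma main_aux (M : CMP S A) (f : S → A → S)
    (hdet : ∀ s a s', M.P s a s' = if s' = f s a then 1 else 0)
    {t k : ℕ} (hk : 0 < k) (h : Hist S A t) (Hstar : ℝ)
    (hub : ∀ c : Contin S A k, FeasibleCont f h c →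
      entropy (visitFreq (histAppend h c)) ≤ Hstar)
    (astar : A)
    (hlt : ∀ c : Contin S A k, FeasibleCont f h c → c.1 ⟨0, hk⟩ ≠ astar →
      entropy (visitFreq (histAppend h c)) < Hstar)
    (πM : MPolicy S A)
    (hrand : πM.p t (lastState h) astar < 1) :
    expEntFrom M πM.toPolicy k h < Hstar := by
  obtain ⟨k, rfl⟩ : ∃ k', k = k' + 1 := ⟨k - 1, by omega⟩
  have hex : ∃ a : A, a ≠ astar ∧ 0 < πM.p t (lastState h) a := by
    by_contra hcon
    push_neg at hcon
    have hz : ∀ a ∈ Finset.univ, a ≠ astar → πM.p t (lastState h) a = 0 := fun a _ ha =>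
      le_antisymm (hcon a ha) (πM.nonneg t (lastState h) a)
    have hsum := πM.sum_one t (lastState h)
    rw [Finset.sum_eq_single astar (fun a ha hne => hz a ha hne) (by simp)] at hsum
    linarith
  obtain ⟨a, hne, hapos⟩ := hex
  obtain ⟨α0, hα0, hwpos⟩ := wOf_exists_pos πM.p f πM.nonneg πM.sum_one k t (lastState h) a hapos
  have hsum1 : ∑ α : Fin (k+1) → A, wOf πM.p f (k+1) t (lastState h) α = 1 :=
    wOf_sum πM.p f πM.sum_one (k+1) t (lastState h)
  have hlt' : ∑ α : Fin (k+1) → A, wOf πM.p f (k+1) t (lastState h) α *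
      entropy (visitFreq (histAppend h (α, stOf f (k+1) (lastState h) α)))
      < ∑ α : Fin (k+1) → A, wOf πM.p f (k+1) t (lastState h) α * Hstar := by
    apply Finset.sum_lt_sum
    · intro α _
      exact mul_le_mul_of_nonneg_left (hub _ (feasible_stOf f h α))
        (wOf_nonneg πM.p f πM.nonneg (k+1) t (lastState h) α)
    · refine ⟨α0, Finset.mem_univ _, ?_⟩
      refine mul_lt_mul_of_pos_left (hlt _ (feasible_stOf f h α0) ?_) hwpos
      show α0 ⟨0, hk⟩ ≠ astar
      have : (⟨0, hk⟩ : Fin (k+1)) = 0 := rfl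
      rw [this, hα0]
      exact hne
  calc expEntFrom M πM.toPolicy (k+1) h < ∑ α : Fin (k+1) → A,
        wOf πM.p f (k+1) t (lastState h) α * Hstar := by
        rw [expEnt_markov M f hdet πM (k+1) h]; exact hlt'
    _ = Hstar := by rw [← Finset.sum_mul, hsum1, one_mul]

end Main

end MyAux

/-- in a CMP with deterministic transitions `f`, if `H*` is the maximal
final entropy over feasible continuations of the prefix `h_t`, there is a unique
optimal first action `a*`, and some feasible continuation starts with a different
action, then every Markovian policy that maximizes the expected final entropy among
Markovian policies and is randomized at `(s_t, t)` (i.e. `π_M(a*|s_t,t) < 1`) suffers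
strictly positive expected regret-to-go. -/
theorem randomized_optimal_markovian_has_positive_regret
    {S A : Type} [Fintype S] [Fintype A] [Nonempty S] [Nonempty A]
    [DecidableEq S] [DecidableEq A]
    (M : CMP S A) (f : S → A → S)
    (hdet : ∀ s a s', M.P s a s' = if s' = f s a then 1 else 0)
    (T t : ℕ) (hT : 1 ≤ T) (ht : t + 1 < T)
    (h : Hist S A t) (Hstar : ℝ)
    (hHstar : IsGreatest
      ((fun c : Contin S A (T - 1 - t) => entropy (visitFreq (histAppend h c))) ''
        {c | FeasibleCont f h c}) Hstar)
    (astar : A)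
    (hopt : ∃ c : Contin S A (T - 1 - t), FeasibleCont f h c
        ∧ c.1 ⟨0, by omega⟩ = astar ∧ entropy (visitFreq (histAppend h c)) = Hstar)
    (huniq : ∀ a : A, (∃ c : Contin S A (T - 1 - t), FeasibleCont f h c
        ∧ c.1 ⟨0, by omega⟩ = a ∧ entropy (visitFreq (histAppend h c)) = Hstar)
        → a = astar)
    (hother : ∃ c : Contin S A (T - 1 - t), FeasibleCont f h c
        ∧ c.1 ⟨0, by omega⟩ ≠ astar)
    (πM : MPolicy S A)
    (hmax : ∀ π' : MPolicy S A,
      expEntFrom M π'.toPolicy (T - 1 - t) h ≤ expEntFrom M πM.toPolicy (T - 1 - t) h)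
    (hrand : πM.p t (lastState h) astar < 1) :
    0 < Hstar - expEntFrom M πM.toPolicy (T - 1 - t) h := by
  have hk : 0 < T - 1 - t := by omega
  rw [sub_pos]
  refine MyAux.main_aux M f hdet hk h Hstar ?_ astar ?_ πM hrand
  · intro c hc
    exact hHstar.2 ⟨c, hc, rfl⟩
  · intro c hc hne
    rcases lt_or_eq_of_le (hHstar.2 ⟨c, hc, rfl⟩ :
        entropy (visitFreq (histAppend h c)) ≤ Hstar) with hlt | heq
    · exact hlt
    · exact absurd (huniq (c.1 ⟨0, hk⟩) ⟨c, hc, rfl, heq⟩) hne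
end

section
/- Let S be a finite nonempty set, let c : S → ℕ be a count vector with total Σ_{s∈S} c(s) = t > 0, and let n ≥ 1. Among all count vectors m : S → ℕ with Σ_{s∈S} m(s) = n, the Shannon entropy of the normalized vector q_m(s) = (c(s) + m(s))/(t + n) is minimized by placing all n additional counts on a state with maximal current count: for any s* ∈ argmax_{s∈S} c(s) and m* = n·1_{s*} (i.e. m*(s*) = n and m*(s) = 0 otherwise), H(q_{m*}) ≤ H(q_m) for every m with Σ_s m(s) = n. Consequently, in the worst-case CMP analysis, the continuation that repeatedly visits a state maximizing the current visitation frequency d_{h_t} attains the minimum final entropy H_* = min_{h ∈ H_{T−t}} H(d_{h_t ⊕ h}) over all state-sequence continuations. -/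
open scoped BigOperators

noncomputable def myPhi (k : ℕ) : ℝ := (k : ℝ) * Real.log (k : ℝ)

lemma myPhi_increment_mono {a b : ℕ} (hab : a ≤ b) :
    myPhi (a + 1) - myPhi a ≤ myPhi (b + 1) - myPhi b := by
  rcases eq_or_lt_of_le hab with rfl | hlt
  · exact le_refl _
  · have hconv := Real.convexOn_mul_log
    set f : ℝ → ℝ := fun x => x * Real.log x with hf
    have ha0 : (0:ℝ) ≤ a := Nat.cast_nonneg a
    have hb0 : (0:ℝ) ≤ b := Nat.cast_nonneg b
    have hab' : (a:ℝ) < b := by exact_mod_cast hlt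
    have h1 : (f ((a:ℝ)+1) - f a) / ((a:ℝ)+1 - a) ≤ (f ((b:ℝ)+1) - f a) / ((b:ℝ)+1 - a) :=
      hconv.secant_mono (Set.mem_Ici.mpr ha0)
        (Set.mem_Ici.mpr (by linarith)) (Set.mem_Ici.mpr (by linarith))
        (by intro h; linarith [congrArg id h]) (ne_of_gt (by linarith)) (by linarith)
    have h2 : (f (a:ℝ) - f ((b:ℝ)+1)) / ((a:ℝ) - ((b:ℝ)+1))
        ≤ (f (b:ℝ) - f ((b:ℝ)+1)) / ((b:ℝ) - ((b:ℝ)+1)) :=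
      hconv.secant_mono (Set.mem_Ici.mpr (by linarith)) (Set.mem_Ici.mpr ha0)
        (Set.mem_Ici.mpr hb0) (ne_of_lt (by linarith)) (ne_of_lt (by linarith)) (le_of_lt hab')
    have hD : (0:ℝ) < (b:ℝ)+1 - a := by linarith
    have eq0 : ((a:ℝ)+1 - a) = 1 := by ring
    rw [eq0, div_one] at h1
    have eq1 : (f (a:ℝ) - f ((b:ℝ)+1)) / ((a:ℝ) - ((b:ℝ)+1))
        = (f ((b:ℝ)+1) - f a) / ((b:ℝ)+1 - a) := by
      rw [div_eq_div_iff (by linarith) (ne_of_gt hD)]; ring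
    have eq2 : (f (b:ℝ) - f ((b:ℝ)+1)) / ((b:ℝ) - ((b:ℝ)+1)) = f ((b:ℝ)+1) - f b := by
      have e : (b:ℝ) - ((b:ℝ)+1) = -1 := by ring
      rw [e, div_neg, div_one]; ring
    rw [eq1, eq2] at h2
    simp only [myPhi]
    push_cast
    have hfa : f (a:ℝ) = (a:ℝ) * Real.log a := rfl
    have hfa1 : f ((a:ℝ)+1) = ((a:ℝ)+1) * Real.log ((a:ℝ)+1) := rfl
    have hfb : f (b:ℝ) = (b:ℝ) * Real.log b := rfl
    have hfb1 : f ((b:ℝ)+1) = ((b:ℝ)+1) * Real.log ((b:ℝ)+1) := rfl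
    linarith [h1, h2]

lemma sum_myPhi_le {S : Type} [Fintype S] [DecidableEq S]
    (c : S → ℕ) (sstar : S) (hs : ∀ s, c s ≤ c sstar) :
    ∀ (n : ℕ) (m : S → ℕ), ∑ s, m s = n →
      ∑ s, myPhi (c s + m s) ≤ ∑ s, myPhi (c s) + (myPhi (c sstar + n) - myPhi (c sstar)) := by
  intro n
  induction n with
  | zero =>
    intro m hm
    have hm0 : ∀ s, m s = 0 := by
      intro s
      have := (Finset.sum_eq_zero_iff.mp hm) s (Finset.mem_univ s)
      exact this
    simp [hm0]
  | succ n ih =>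
    intro m hm
    obtain ⟨s0, _, hs0⟩ : ∃ s0 ∈ Finset.univ, m s0 ≠ 0 := by
      by_contra h
      push_neg at h
      have : ∑ s, m s = 0 := Finset.sum_eq_zero (fun s hs => h s hs)
      omega
    have hms0 : 1 ≤ m s0 := Nat.one_le_iff_ne_zero.mpr hs0
    set m' := Function.update m s0 (m s0 - 1) with hm'
    have hsplitN : ∀ (f : S → ℕ), ∑ s, f s = f s0 + ∑ s ∈ Finset.univ.erase s0, f s :=
      fun f => (Finset.add_sum_erase _ f (Finset.mem_univ s0)).symm
    have hsplit : ∀ (f : S → ℝ), ∑ s, f s = f s0 + ∑ s ∈ Finset.univ.erase s0, f s :=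
      fun f => (Finset.add_sum_erase _ f (Finset.mem_univ s0)).symm
    have herase : ∀ s ∈ Finset.univ.erase s0, m' s = m s := by
      intro s hsmem
      exact Function.update_of_ne (Finset.ne_of_mem_erase hsmem) _ _
    have hm's0 : m' s0 = m s0 - 1 := Function.update_self _ _ _
    have hmE : m s0 + ∑ s ∈ Finset.univ.erase s0, m s = n + 1 := by
      rw [← hsplitN m]; exact hm
    have hsum' : ∑ s, m' s = n := by
      rw [hsplitN m', Finset.sum_congr rfl herase, hm's0]
      have heta : (Finset.univ.erase s0).sum m = ∑ s ∈ Finset.univ.erase s0, m s := rfl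
      omega
    have key := ih m' hsum'
    have hle : m s0 ≤ n + 1 := by omega
    have hinc : myPhi (c s0 + m s0) - myPhi (c s0 + (m s0 - 1))
        ≤ myPhi (c sstar + (n+1)) - myPhi (c sstar + n) := by
      have h1 : c s0 + (m s0 - 1) + 1 = c s0 + m s0 := by omega
      have h2 : c sstar + n + 1 = c sstar + (n + 1) := by omega
      have := myPhi_increment_mono (a := c s0 + (m s0 - 1)) (b := c sstar + n)
        (by have := hs s0; omega)
      rw [h1, h2] at this
      exact this
    have hS1 : ∑ s, myPhi (c s + m s)
        = myPhi (c s0 + m s0) + ∑ s ∈ Finset.univ.erase s0, myPhi (c s + m s) :=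
      hsplit (fun s => myPhi (c s + m s))
    have hS2 : ∑ s, myPhi (c s + m' s)
        = myPhi (c s0 + (m s0 - 1)) + ∑ s ∈ Finset.univ.erase s0, myPhi (c s + m s) := by
      rw [hsplit (fun s => myPhi (c s + m' s)), hm's0]
      congr 1
      exact Finset.sum_congr rfl (fun s hsmem => by rw [herase s hsmem])
    linarith [key, hinc, hS1, hS2]

lemma entropy_div_eq {S : Type} [Fintype S] (k : S → ℕ) (N : ℕ) (hN : 0 < N)
    (hsum : ∑ s, k s = N) :
    entropy (fun s => ((k s : ℕ) : ℝ) / ((N : ℕ) : ℝ)) =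
      Real.log N - (∑ s, myPhi (k s)) / N := by
  have hN' : (0:ℝ) < N := by exact_mod_cast hN
  have hterm : ∀ s : S, ((k s : ℝ)/(N:ℝ)) * Real.log ((k s:ℝ)/(N:ℝ))
      = myPhi (k s) / N - (k s : ℝ) * Real.log N / N := by
    intro s
    rcases Nat.eq_zero_or_pos (k s) with h | h
    · simp [h, myPhi]
    · have hk : (0:ℝ) < k s := by exact_mod_cast h
      rw [Real.log_div (ne_of_gt hk) (ne_of_gt hN'), myPhi]
      ring
  have hsumR : (∑ s, ((k s : ℕ):ℝ)) = (N:ℝ) := by exact_mod_cast congrArg (Nat.cast (R := ℝ)) hsum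
  unfold entropy
  rw [Finset.sum_congr rfl (fun s _ => hterm s), Finset.sum_sub_distrib,
    ← Finset.sum_div, ← Finset.sum_div, ← Finset.sum_mul, hsumR]
  field_simp
  ring
/-- among all count vectors `m` with total `n`, the entropy of the
normalized vector `(c + m)/(t + n)` is minimized by placing all `n` additional counts on
a state `s*` of maximal current count. Consequently, for a prefix state sequence `σ`
with counts `c`, the continuation that repeatedly visits `s*` attains the minimum final
entropy over all state-sequence continuations. -/
theorem entropy_minimized_by_mass_on_argmax
    {S : Type} [Fintype S] [Nonempty S] [DecidableEq S]
    (c : S → ℕ) (t n : ℕ) (hc : ∑ s, c s = t) (ht : 0 < t) (hn : 1 ≤ n)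
    (sstar : S) (hsstar : ∀ s, c s ≤ c sstar) :
    (∀ m : S → ℕ, ∑ s, m s = n →
      entropy (fun s => ((c s + if s = sstar then n else 0 : ℕ) : ℝ) / ((t + n : ℕ) : ℝ))
        ≤ entropy (fun s => ((c s + m s : ℕ) : ℝ) / ((t + n : ℕ) : ℝ)))
    ∧ (∀ σ : Fin t → S,
        (∀ s, (Finset.univ.filter (fun i : Fin t => σ i = s)).card = c s) →
        ∀ τ : Fin n → S,
          entropy (fun s => ((c s
              + (Finset.univ.filter (fun _ : Fin n => sstar = s)).card : ℕ) : ℝ)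
            / ((t + n : ℕ) : ℝ))
          ≤ entropy (fun s => ((c s
              + (Finset.univ.filter (fun j : Fin n => τ j = s)).card : ℕ) : ℝ)
            / ((t + n : ℕ) : ℝ))) := by
  have hN : 0 < t + n := by omega
  have hNR : (0:ℝ) < ((t+n:ℕ):ℝ) := by exact_mod_cast hN
  have main : ∀ m : S → ℕ, ∑ s, m s = n →
      entropy (fun s => ((c s + if s = sstar then n else 0 : ℕ) : ℝ) / ((t + n : ℕ) : ℝ))
        ≤ entropy (fun s => ((c s + m s : ℕ) : ℝ) / ((t + n : ℕ) : ℝ)) := by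
    intro m hm
    have h1 : ∑ s, (c s + m s) = t + n := by
      rw [Finset.sum_add_distrib, hc, hm]
    have h2 : ∑ s, (c s + if s = sstar then n else 0) = t + n := by
      rw [Finset.sum_add_distrib, hc, Finset.sum_ite_eq' Finset.univ sstar (fun _ => n)]
      simp
    have eL : entropy (fun s => ((c s + if s = sstar then n else 0 : ℕ) : ℝ) / ((t + n : ℕ) : ℝ))
        = Real.log ((t+n:ℕ):ℝ)
          - (∑ s, myPhi (c s + if s = sstar then n else 0)) / ((t+n:ℕ):ℝ) :=
      entropy_div_eq (fun s => c s + if s = sstar then n else 0) (t+n) hN h2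
    have eR : entropy (fun s => ((c s + m s : ℕ) : ℝ) / ((t + n : ℕ) : ℝ))
        = Real.log ((t+n:ℕ):ℝ) - (∑ s, myPhi (c s + m s)) / ((t+n:ℕ):ℝ) :=
      entropy_div_eq (fun s => c s + m s) (t+n) hN h1
    rw [eL, eR]
    have hB := sum_myPhi_le c sstar hsstar n m hm
    have hA : ∑ s, myPhi (c s + if s = sstar then n else 0)
        = ∑ s, myPhi (c s) + (myPhi (c sstar + n) - myPhi (c sstar)) := by
      have hterm : ∀ s, myPhi (c s + if s = sstar then n else 0)
          = myPhi (c s) + (if s = sstar then myPhi (c sstar + n) - myPhi (c sstar) else 0) := by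
        intro s
        by_cases h : s = sstar
        · subst h; simp
        · simp [h]
      rw [Finset.sum_congr rfl (fun s _ => hterm s), Finset.sum_add_distrib,
        Finset.sum_ite_eq' Finset.univ sstar (fun _ => myPhi (c sstar + n) - myPhi (c sstar))]
      simp
    rw [hA]
    have hdiv : (∑ s, myPhi (c s + m s)) / ((t+n:ℕ):ℝ)
        ≤ (∑ s, myPhi (c s) + (myPhi (c sstar + n) - myPhi (c sstar))) / ((t+n:ℕ):ℝ) := by
      gcongr
    linarith
  refine ⟨main, ?_⟩
  intro σ hσ τ
  have hm : ∑ s, (Finset.univ.filter (fun j : Fin n => τ j = s)).card = n := by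
    have hcards := Finset.card_eq_sum_card_fiberwise
      (f := τ) (s := Finset.univ) (t := Finset.univ) (fun x _ => Finset.mem_univ _)
    simpa using hcards.symm
  have hrw : ∀ s : S, (Finset.univ.filter (fun _ : Fin n => sstar = s)).card
      = if s = sstar then n else 0 := by
    intro s
    by_cases h : s = sstar
    · subst h; simp
    · have hne : sstar ≠ s := fun hh => h hh.symm
      simp [hne, h]
  simp only [hrw]
  exact main (fun s => (Finset.univ.filter (fun j : Fin n => τ j = s)).card) hm
end
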